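/- Let d ≥ 1, let F : ℝ^d → ℝ, and let (F_n)_{n∈ℕ} be a sequence of functions ℝ^d → ℝ each of which is nondecreasing with respect to the componentwise partial order (i.e., F_n(x) ≤ F_n(y) whenever x_k ≤ y_k for all k). If F_n → F Lebesgue-almost everywhere on ℝ^d, then F_n(x) → F(x) at every point x at which F is continuous. -/

import Mathlib

open MeasureTheory Filter Topology

theorem stmt_1 (d : ℕ) (hd : 1 ≤ d)
    (F : (Fin d → ℝ) → ℝ) (Fseq : ℕ → (Fin d → ℝ) → ℝ)
    (hmono : ∀ n, Monotone (Fseq n))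
    (hae : ∀ᵐ x ∂(volume : Measure (Fin d → ℝ)),
      Tendsto (fun n => Fseq n x) atTop (𝓝 (F x))) :
    ∀ x : Fin d → ℝ, ContinuousAt F x →
      Tendsto (fun n => Fseq n x) atTop (𝓝 (F x)) := by
  intro x hc
  set S : Set (Fin d → ℝ) :=
    {y | Tendsto (fun n => Fseq n y) atTop (𝓝 (F y))} with hSdef
  have hS : volume Sᶜ = 0 := hae
  have key : ∀ (a b : Fin d → ℝ), (∀ i, a i < b i) →
      ∃ y ∈ S, ∀ i, a i < y i ∧ y i < b i := by
    intro a b hab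
    have hbox : 0 < volume (Set.pi Set.univ fun i => Set.Ioo (a i) (b i)) := by
      rw [volume_pi_pi]
      refine CanonicallyOrderedAdd.prod_pos.mpr fun i _ => ?_
      rw [Real.volume_Ioo]
      exact ENNReal.ofReal_pos.mpr (by linarith [hab i])
    by_contra h
    push_neg at h
    have hsub : (Set.pi Set.univ fun i => Set.Ioo (a i) (b i)) ⊆ Sᶜ := by
      intro y hy hyS
      exact absurd (fun i => hy i (Set.mem_univ i)) (by simpa using h y hyS)
    exact absurd (measure_mono_null hsub hS) hbox.ne'
  rw [Metric.tendsto_atTop]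
  intro ε hε
  obtain ⟨δ, hδ, hδ'⟩ := Metric.continuousAt_iff.mp hc (ε / 2) (by linarith)
  obtain ⟨y, hyS, hy⟩ := key (fun i => x i - δ / 2) x (fun i => by linarith)
  obtain ⟨z, hzS, hz⟩ := key x (fun i => x i + δ / 2) (fun i => by linarith)
  have hdy : dist y x < δ := by
    rw [dist_pi_lt_iff hδ]
    intro i
    rw [Real.dist_eq, abs_lt]
    constructor <;> linarith [(hy i).1, (hy i).2]
  have hdz : dist z x < δ := by
    rw [dist_pi_lt_iff hδ]
    intro i
    rw [Real.dist_eq, abs_lt]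
    constructor <;> linarith [(hz i).1, (hz i).2]
  have hFy : |F y - F x| < ε / 2 := by
    have := hδ' hdy; rwa [Real.dist_eq] at this
  have hFz : |F z - F x| < ε / 2 := by
    have := hδ' hdz; rwa [Real.dist_eq] at this
  have hyle : y ≤ x := fun i => (hy i).2.le
  have hzle : x ≤ z := fun i => (hz i).1.le
  have h1 : ∀ᶠ n in atTop, F y - ε / 2 < Fseq n y :=
    (hyS.eventually (eventually_gt_nhds (by linarith [abs_lt.mp hFy])))
  have h2 : ∀ᶠ n in atTop, Fseq n z < F z + ε / 2 :=
    (hzS.eventually (eventually_lt_nhds (by linarith [abs_lt.mp hFz])))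
  rw [eventually_atTop] at h1 h2
  obtain ⟨N1, hN1⟩ := h1
  obtain ⟨N2, hN2⟩ := h2
  refine ⟨max N1 N2, fun n hn => ?_⟩
  have a1 := hN1 n (le_trans (le_max_left _ _) hn)
  have a2 := hN2 n (le_trans (le_max_right _ _) hn)
  have b1 := hmono n hyle
  have b2 := hmono n hzle
  rw [Real.dist_eq, abs_lt]
  have c1 := abs_lt.mp hFy
  have c2 := abs_lt.mp hFz
  constructor <;> linarith
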